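/- Let E be a finite effect algebra with (pairwise distinct) atoms a_1,…,a_m, and suppose s_1,…,s_m are nonnegative real numbers such that Σ_{t=1}^m y_t s_t = 1 for every (y_1,…,y_m) ∈ Seq(E). If an element x ∈ E admits two representations x = k_1 a_1 ⊕ … ⊕ k_m a_m = l_1 a_1 ⊕ … ⊕ l_m a_m (with k_t, l_t ∈ ℕ, both orthosums defined), then Σ_{t=1}^m k_t s_t = Σ_{t=1}^m l_t s_t. (In other words, the map h(k_1 a_1 ⊕ … ⊕ k_m a_m) = Σ_t k_t s_t is well defined on E.) -/

import Mathlib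

/-- An effect algebra: a set with 0, 1 and a partially defined binary
operation `⊕`, modeled as an `Option`-valued operation. -/
structure EffectAlgebra (E : Type*) where
  oplus : E → E → Option E
  zero : E
  one : E
  comm : ∀ p q, oplus p q = oplus q p
  assoc : ∀ p q r s qr, oplus q r = some qr → oplus p qr = some s →
    ∃ pq, oplus p q = some pq ∧ oplus pq r = some s
  orthosupp : ∀ p, ∃! q, oplus p q = some one
  zero_unit : ∀ p q, oplus one p = some q → p = zero

namespace EffectAlgebra

variable {E : Type*}

/-- `p ≤ q` iff there is `r` with `p ⊕ r` defined and equal to `q`. -/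
def le (W : EffectAlgebra E) (p q : E) : Prop := ∃ r, W.oplus p r = some q

/-- An atom is a minimal element of `E \ {0}`. -/
def IsAtomElem (W : EffectAlgebra E) (x : E) : Prop :=
  x ≠ W.zero ∧ ∀ y : E, W.le y x → y ≠ W.zero → y = x

/-- Partial orthosum of a list of elements. -/
def listSum (W : EffectAlgebra E) : List E → Option E
  | [] => some W.zero
  | x :: xs => (listSum W xs).bind (fun y => W.oplus x y)

/-- The orthosum `k 0 • a 0 ⊕ ⋯ ⊕ k (m-1) • a (m-1)`, when defined. -/
def mulSum (W : EffectAlgebra E) {m : ℕ} (a : Fin m → E) (k : Fin m → ℕ) : Option E :=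
  W.listSum ((List.ofFn (fun t => List.replicate (k t) (a t))).flatten)

/-- `Seq(E)`: tuples `k` with `⨁ k t • a t` defined and equal to `1`. -/
def SeqSet (W : EffectAlgebra E) {m : ℕ} (a : Fin m → E) : Set (Fin m → ℕ) :=
  {k | W.mulSum a k = some W.one}

/-- `a : Fin m → E` enumerates the atoms of `E` without repetition. -/
def AtomFamily (W : EffectAlgebra E) {m : ℕ} (a : Fin m → E) : Prop :=
  Function.Injective a ∧ (∀ t, W.IsAtomElem (a t)) ∧
    ∀ x : E, W.IsAtomElem x → ∃ t, x = a t

/-- `A ∈ M(E)`: the rows of `A` are pairwise distinct and enumerate `Seq(E)`. -/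
def MemM (W : EffectAlgebra E) {m n : ℕ} (a : Fin m → E) (A : Matrix (Fin n) (Fin m) ℕ) : Prop :=
  (∀ i j : Fin n, i ≠ j → ∃ t, A i t ≠ A j t) ∧
    {k : Fin m → ℕ | ∃ i, A i = k} = W.SeqSet a

/-- A state on an effect algebra. -/
def IsState (W : EffectAlgebra E) (s : E → ℝ) : Prop :=
  (∀ x, 0 ≤ s x ∧ s x ≤ 1) ∧ s W.one = 1 ∧
    ∀ p q r, W.oplus p q = some r → s p + s q ≤ 1 ∧ s r = s p + s q

end EffectAlgebra

/-- `(A|1)`: the matrix `A` augmented by a column of ones. -/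
def augmentOnes {n m : ℕ} {R : Type*} [One R] (A : Matrix (Fin n) (Fin m) R) :
    Matrix (Fin n) (Fin (m + 1)) R :=
  Matrix.of fun i j => if h : (j : ℕ) < m then A i ⟨j, h⟩ else 1

namespace EffectAlgebra

variable {E : Type*} (W : EffectAlgebra E)

lemma one_oplus_zero : W.oplus W.one W.zero = some W.one := by
  obtain ⟨q, hq, -⟩ := W.orthosupp W.one
  have := W.zero_unit q W.one hq
  rwa [this] at hq

/-- reverse associativity -/
lemma rot {p q r pq s : E} (h1 : W.oplus p q = some pq) (h2 : W.oplus pq r = some s) :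
    ∃ qr, W.oplus q r = some qr ∧ W.oplus p qr = some s := by
  have h2' : W.oplus r pq = some s := by rwa [W.comm]
  obtain ⟨rp, hrp, hrpq⟩ := W.assoc r p q s pq h1 h2'
  have hq : W.oplus q rp = some s := by rwa [W.comm] at hrpq
  obtain ⟨qr, hqr, h3⟩ := W.assoc q r p s rp hrp hq
  exact ⟨qr, hqr, by rwa [W.comm] at h3⟩

lemma supp_unique {p q q' : E} (h : W.oplus p q = some W.one)
    (h' : W.oplus p q' = some W.one) : q = q' := by
  obtain ⟨u, -, hu⟩ := W.orthosupp p
  rw [hu q h, hu q' h']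

lemma oplus_zero (p : E) : W.oplus p W.zero = some p := by
  obtain ⟨p', hp', -⟩ := W.orthosupp p
  have h1 : W.oplus W.zero W.one = some W.one := by rw [W.comm]; exact W.one_oplus_zero
  obtain ⟨u, hu, hu1⟩ := W.assoc W.zero p p' W.one W.one hp' h1
  have h2 : W.oplus p' u = some W.one := by rwa [W.comm] at hu1
  have h3 : W.oplus p' p = some W.one := by rwa [W.comm] at hp'
  obtain rfl : p = u := W.supp_unique h3 h2
  rwa [W.comm] at hu

lemma cancel {c b b' v : E} (h : W.oplus c b = some v) (h' : W.oplus c b' = some v) :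
    b = b' := by
  obtain ⟨v', hv', -⟩ := W.orthosupp v
  have hv'' : W.oplus v' v = some W.one := by rwa [W.comm]
  obtain ⟨u, hu, hub⟩ := W.assoc v' c b W.one v h hv''
  obtain ⟨u2, hu2, hub'⟩ := W.assoc v' c b' W.one v h' hv''
  rw [hu] at hu2
  obtain rfl : u = u2 := by injection hu2
  exact W.supp_unique hub hub'

lemma eq_zero_of_oplus_eq_zero {p q : E} (h : W.oplus p q = some W.zero) :
    p = W.zero ∧ q = W.zero := by
  have h1 : W.oplus W.one W.zero = some W.one := W.one_oplus_zero
  obtain ⟨u, hu, -⟩ := W.assoc W.one p q W.one W.zero h h1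
  have hp := W.zero_unit p u hu
  subst hp
  refine ⟨rfl, ?_⟩
  have h0 : W.oplus W.zero q = some q := by rw [W.comm]; exact W.oplus_zero q
  rw [h0] at h; injection h

/-- strict order -/
def lt (p q : E) : Prop := ∃ r, r ≠ W.zero ∧ W.oplus p r = some q

lemma lt_irrefl (p : E) : ¬ W.lt p p := by
  rintro ⟨r, hr, h⟩
  exact hr (W.cancel h (W.oplus_zero p))

lemma lt_trans {p q r : E} (h1 : W.lt p q) (h2 : W.lt q r) : W.lt p r := by
  obtain ⟨u, hu, hpu⟩ := h1
  obtain ⟨v, hv, hqv⟩ := h2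
  obtain ⟨uv, huv, hpuv⟩ := W.rot hpu hqv
  refine ⟨uv, fun h0 => ?_, hpuv⟩
  subst h0
  exact hu (W.eq_zero_of_oplus_eq_zero huv).1

lemma exchange_aux {x y v w : E} (h : (W.oplus x v).bind (W.oplus y) = some w) :
    (W.oplus y v).bind (W.oplus x) = some w := by
  obtain ⟨u, hu, hyu⟩ := Option.bind_eq_some_iff.mp h
  have hyu' : W.oplus y u = some w := hyu
  obtain ⟨yx, hyx, hyxv⟩ := W.assoc y x v w u hu hyu'
  have hxy : W.oplus x y = some yx := by rwa [W.comm]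
  obtain ⟨yv, hyv, hxyv⟩ := W.rot hxy hyxv
  rw [hyv]
  exact hxyv

lemma exchange (x y : E) (o : Option E) :
    (o.bind (W.oplus x)).bind (W.oplus y) = (o.bind (W.oplus y)).bind (W.oplus x) := by
  cases o with
  | none => rfl
  | some v =>
    simp only [Option.bind_some]
    rcases h1 : (W.oplus x v).bind (W.oplus y) with _ | w
    · rcases h2 : (W.oplus y v).bind (W.oplus x) with _ | w'
      · rfl
      · rw [W.exchange_aux h2] at h1; exact h1.symm
    · rw [W.exchange_aux h1]

lemma listSum_perm {L L' : List E} (h : L.Perm L') : W.listSum L = W.listSum L' := by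
  induction h with
  | nil => rfl
  | cons x _ ih => simp only [listSum, ih]
  | swap x y L => simp only [listSum]; exact W.exchange x y (W.listSum L)
  | trans _ _ ih1 ih2 => rw [ih1, ih2]

lemma listSum_append {L1 L2 : List E} {u v w : E} (h1 : W.listSum L1 = some u)
    (h2 : W.listSum L2 = some v) (h : W.oplus u v = some w) :
    W.listSum (L1 ++ L2) = some w := by
  induction L1 generalizing u w with
  | nil =>
    obtain rfl : W.zero = u := by injection h1
    have : W.oplus W.zero v = some v := by rw [W.comm]; exact W.oplus_zero v
    rw [this] at h
    obtain rfl : v = w := by injection h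
    simpa using h2
  | cons y L1 ih =>
    simp only [listSum] at h1
    obtain ⟨u0, hu0, hyu0⟩ := Option.bind_eq_some_iff.mp h1
    -- w = u ⊕ v = (y ⊕ u0) ⊕ v ; rot: ∃ u0v, u0 ⊕ v = u0v ∧ y ⊕ u0v = w
    obtain ⟨u0v, hu0v, hyw⟩ := W.rot hyu0 h
    have := ih hu0 hu0v
    rw [List.cons_append]
    simp only [listSum]
    rw [this]
    simpa using hyw

lemma flatten_map_perm {ι : Type*} (A B : ι → List E) (ts : List ι) :
    ((ts.map fun t => A t ++ B t).flatten).Perm ((ts.map A).flatten ++ (ts.map B).flatten) := by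
  induction ts with
  | nil => simp
  | cons t ts ih =>
    simp only [List.map_cons, List.flatten_cons, List.append_assoc]
    refine List.Perm.append_left (A t) ?_
    refine (ih.append_left (B t)).trans ?_
    rw [← List.append_assoc, ← List.append_assoc]
    exact List.perm_append_comm.append_right _

lemma mulSum_add {m : ℕ} {a : Fin m → E} {k j : Fin m → ℕ} {u v w : E}
    (hk : W.mulSum a k = some u) (hj : W.mulSum a j = some v)
    (h : W.oplus u v = some w) : W.mulSum a (k + j) = some w := by
  unfold mulSum at *
  have e1 : (List.ofFn fun t => List.replicate ((k + j) t) (a t)) =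
      List.ofFn fun t => List.replicate (k t) (a t) ++ List.replicate (j t) (a t) := by
    congr 1
    funext t
    simp only [Pi.add_apply, List.replicate_add]
  rw [e1, List.ofFn_eq_map]
  have hperm := flatten_map_perm (E := E)
    (fun t => List.replicate (k t) (a t)) (fun t => List.replicate (j t) (a t))
    (List.finRange m)
  rw [W.listSum_perm hperm]
  rw [List.ofFn_eq_map] at hk hj
  exact W.listSum_append hk hj h

lemma mulSum_zero {m : ℕ} (a : Fin m → E) : W.mulSum a 0 = some W.zero := by
  unfold mulSum
  have : (List.ofFn fun t => List.replicate ((0 : Fin m → ℕ) t) (a t)) =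
      List.ofFn fun _ : Fin m => ([] : List E) := by
    congr 1
  rw [this]
  have : (List.ofFn fun _ : Fin m => ([] : List E)).flatten = [] := by
    simp
  rw [this]
  rfl

lemma mulSum_single {m : ℕ} (a : Fin m → E) (t : Fin m) :
    W.mulSum a (fun u => if u = t then 1 else 0) = some (a t) := by
  unfold mulSum
  rw [List.ofFn_eq_map]
  have hc : ∀ ts : List (Fin m),
      ((ts.map fun u => List.replicate (if u = t then 1 else 0) (a u)).flatten) =
        List.replicate (ts.count t) (a t) := by
    intro ts
    induction ts with
    | nil => simp
    | cons u ts ih =>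
      by_cases h : u = t
      · subst h
        simp [ih, List.count_cons, List.replicate_succ]
      · simp [ih, List.count_cons, h, Ne.symm h]
  rw [hc]
  have h1 : (List.finRange m).count t = 1 :=
    List.count_eq_one_of_mem (List.nodup_finRange m) (List.mem_finRange t)
  rw [h1]
  show (W.listSum [a t]) = some (a t)
  show (W.listSum []).bind (fun y => W.oplus (a t) y) = some (a t)
  show (some W.zero).bind (fun y => W.oplus (a t) y) = some (a t)
  rw [Option.bind_some]
  exact W.oplus_zero (a t)

lemma exists_atom_le [Finite E] (x : E) (hx : x ≠ W.zero) :
    ∃ b, W.IsAtomElem b ∧ ∃ r, W.oplus b r = some x := by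
  haveI : IsTrans E W.lt := ⟨fun _ _ _ => W.lt_trans⟩
  haveI : IsIrrefl E W.lt := ⟨W.lt_irrefl⟩
  have wf := Finite.wellFounded_of_trans_of_irrefl W.lt
  refine wf.induction
    (C := fun x => x ≠ W.zero → ∃ b, W.IsAtomElem b ∧ ∃ r, W.oplus b r = some x) x ?_ hx
  clear hx x
  intro x ih hx
  by_cases hax : W.IsAtomElem x
  · exact ⟨x, hax, W.zero, W.oplus_zero x⟩
  · rw [IsAtomElem] at hax
    push_neg at hax
    obtain ⟨y, hyx, hy0, hyne⟩ := hax hx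
    obtain ⟨r, hr⟩ := hyx
    have hrne : r ≠ W.zero := by
      intro h0; subst h0
      rw [W.oplus_zero y] at hr
      exact hyne (by injection hr)
    obtain ⟨b, hb, r', hbr'⟩ := ih y ⟨r, hrne, hr⟩ hy0
    obtain ⟨rr, _, hbrr⟩ := W.rot hbr' hr
    exact ⟨b, hb, rr, hbrr⟩

lemma decompose [Finite E] {m : ℕ} {a : Fin m → E} (ha : W.AtomFamily a) (x : E) :
    ∃ j, W.mulSum a j = some x := by
  haveI : IsTrans E W.lt := ⟨fun _ _ _ => W.lt_trans⟩
  haveI : IsIrrefl E W.lt := ⟨W.lt_irrefl⟩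
  have wf := Finite.wellFounded_of_trans_of_irrefl W.lt
  refine wf.induction (C := fun x => ∃ j, W.mulSum a j = some x) x ?_
  clear x
  intro x ih
  by_cases hx : x = W.zero
  · exact ⟨0, hx ▸ W.mulSum_zero a⟩
  · obtain ⟨b, hb, r, hbr⟩ := W.exists_atom_le x hx
    obtain ⟨t, rfl⟩ := ha.2.2 b hb
    have hrb : W.oplus r (a t) = some x := by rwa [W.comm] at hbr
    have hrx : W.lt r x := ⟨a t, hb.1, hrb⟩
    obtain ⟨j, hj⟩ := ih r hrx
    exact ⟨j + fun u => if u = t then 1 else 0,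
      W.mulSum_add hj (W.mulSum_single a t) hrb⟩

end EffectAlgebra


/-- Well-definedness: if `∑ y t * s t = 1` for all `y ∈ Seq(E)` and `x` has two
representations `⨁ k t • a t = ⨁ l t • a t`, then `∑ k t * s t = ∑ l t * s t`. -/

theorem sum_well_defined {E : Type*} [Fintype E] (W : EffectAlgebra E)
    {m : ℕ} (a : Fin m → E) (ha : W.AtomFamily a)
    (s : Fin m → ℝ) (hs : ∀ t, 0 ≤ s t)
    (hsol : ∀ y ∈ W.SeqSet a, ∑ t : Fin m, (y t : ℝ) * s t = 1)
    (x : E) (k l : Fin m → ℕ)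
    (hk : W.mulSum a k = some x) (hl : W.mulSum a l = some x) :
    ∑ t : Fin m, (k t : ℝ) * s t = ∑ t : Fin m, (l t : ℝ) * s t := by
  obtain ⟨x', hx', -⟩ := W.orthosupp x
  obtain ⟨j, hj⟩ := W.decompose ha x'
  have h1 : (k + j) ∈ W.SeqSet a := W.mulSum_add hk hj hx'
  have h2 : (l + j) ∈ W.SeqSet a := W.mulSum_add hl hj hx'
  have e1 := hsol _ h1
  have e2 := hsol _ h2
  simp only [Pi.add_apply, Nat.cast_add, add_mul, Finset.sum_add_distrib] at e1 e2
  linarith
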